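/- For any polynomial v of degree at most p on the interval (-1,1), the L²(-1,1) norm of v is bounded by (p+1)/√2 times the L¹(-1,1) norm of v. -/

import Mathlib

open MeasureTheory

section LegendreAux
open Polynomial

open Polynomial

noncomputable def Leg : ℕ → Polynomial ℝ
  | 0 => 1
  | 1 => X
  | (n+2) => C ((2*(n:ℝ)+3)/((n:ℝ)+2)) * X * Leg (n+1) - C (((n:ℝ)+1)/((n:ℝ)+2)) * Leg n

lemma Leg_zero : Leg 0 = 1 := rfl
lemma Leg_one : Leg 1 = X := rfl

lemma bonnet (n : ℕ) : C ((n:ℝ)+2) * Leg (n+2) =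
    C (2*(n:ℝ)+3) * X * Leg (n+1) - C ((n:ℝ)+1) * Leg n := by
  have h2 : ((n:ℝ)+2) ≠ 0 := by positivity
  show C ((n:ℝ)+2) * (C ((2*(n:ℝ)+3)/((n:ℝ)+2)) * X * Leg (n+1)
      - C (((n:ℝ)+1)/((n:ℝ)+2)) * Leg n) = _
  rw [mul_sub]
  congr 1
  · rw [show C ((n:ℝ)+2) * (C ((2*(n:ℝ)+3)/((n:ℝ)+2)) * X * Leg (n+1))
        = (C ((n:ℝ)+2) * C ((2*(n:ℝ)+3)/((n:ℝ)+2))) * X * Leg (n+1) by ring, ← C_mul]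
    rw [mul_div_cancel₀ _ h2]
  · rw [← mul_assoc, ← C_mul, mul_div_cancel₀ _ h2]

lemma Leg_eval_one (n : ℕ) : (Leg n).eval 1 = 1 := by
  induction n using Nat.twoStepInduction with
  | zero => simp [Leg_zero]
  | one => simp [Leg_one]
  | more n ih2 ih1 =>
    have h := congrArg (Polynomial.eval (1:ℝ)) (bonnet n)
    simp only [eval_mul, eval_sub, eval_C, eval_X, ih1, ih2] at h
    have h2 : ((n:ℝ)+2) ≠ 0 := by positivity
    have : ((n:ℝ)+2) * (Leg (n+2)).eval 1 = ((n:ℝ)+2) * 1 := by rw [h]; ring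
    exact mul_left_cancel₀ h2 this

lemma Leg_eval_neg_one (n : ℕ) : (Leg n).eval (-1) = (-1)^n := by
  induction n using Nat.twoStepInduction with
  | zero => simp [Leg_zero]
  | one => simp [Leg_one]
  | more n ih2 ih1 =>
    have h := congrArg (Polynomial.eval (-1:ℝ)) (bonnet n)
    simp only [eval_mul, eval_sub, eval_C, eval_X, ih1, ih2] at h
    have h2 : ((n:ℝ)+2) ≠ 0 := by positivity
    have : ((n:ℝ)+2) * (Leg (n+2)).eval (-1) = ((n:ℝ)+2) * ((-1:ℝ))^(n+2) := by
      rw [h]; ring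
    exact mul_left_cancel₀ h2 this

lemma C_ne (n : ℕ) : (C ((n:ℝ)+2) : Polynomial ℝ) ≠ 0 := by
  simp only [ne_eq, C_eq_zero]; positivity

lemma leg_deriv (n : ℕ) :
    (derivative (Leg (n+1)) = X * derivative (Leg n) + C ((n:ℝ)+1) * Leg n) ∧
    (X * derivative (Leg (n+1)) = derivative (Leg n) + C ((n:ℝ)+1) * Leg (n+1)) := by
  induction n with
  | zero =>
    constructor
    · simp [Leg_zero, Leg_one]
    · simp [Leg_zero, Leg_one]
  | succ n ih =>
    obtain ⟨ih1, ih2⟩ := ih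
    have hb := bonnet n
    have hdb := congrArg derivative hb
    simp only [derivative_mul, derivative_C, derivative_X, zero_mul, mul_one, zero_add,
      derivative_sub] at hdb
    simp only [show n+1+1 = n+2 from rfl]
    push_cast
    simp only [C_add, C_mul, map_ofNat, C_1] at hb hdb ih1 ih2 ⊢
    constructor
    · apply mul_left_cancel₀ (show (C (n:ℝ) + 2 : Polynomial ℝ) ≠ 0 from ?_)
      · linear_combination hdb + (C (n:ℝ) + 1) * ih2
      · intro h
        have := congrArg (fun q => Polynomial.eval 0 q) h
        simp at this
        linarith [Nat.cast_nonneg (α := ℝ) n]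
    · have A1 : derivative (Leg (n+2)) = X * derivative (Leg (n+1)) + (C (n:ℝ) + 2) * Leg (n+1) := by
        apply mul_left_cancel₀ (show (C (n:ℝ) + 2 : Polynomial ℝ) ≠ 0 from ?_)
        · linear_combination hdb + (C (n:ℝ) + 1) * ih2
        · intro h
          have := congrArg (fun q => Polynomial.eval 0 q) h
          simp at this
          linarith [Nat.cast_nonneg (α := ℝ) n]
      linear_combination X * A1 + X * ih2 - ih1 - hb

lemma leg_B (n : ℕ) : (X^2 - 1) * derivative (Leg (n+1)) =
    C ((n:ℝ)+1) * (X * Leg (n+1) - Leg n) := by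
  obtain ⟨ih1, ih2⟩ := leg_deriv n
  linear_combination X * ih2 - ih1

lemma leg_ode (n : ℕ) : (X^2 - 1) * derivative (derivative (Leg n)) + 2 * X * derivative (Leg n)
    = C ((n:ℝ)*((n:ℝ)+1)) * Leg n := by
  cases n with
  | zero => simp [Leg_zero]
  | succ n =>
    obtain ⟨ih1, ih2⟩ := leg_deriv n
    have hd := congrArg derivative (leg_B n)
    simp only [derivative_mul, derivative_sub, derivative_C, derivative_X, derivative_pow,
      derivative_one, Nat.cast_ofNat, map_ofNat, zero_mul, zero_add, sub_zero, mul_one,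
      pow_one, zero_sub, one_mul] at hd
    push_cast
    simp only [C_add, C_mul, C_1] at hd ih1 ih2 ⊢
    linear_combination hd + (C (n:ℝ) + 1) * ih2

lemma integral_poly_deriv (q : Polynomial ℝ) :
    ∫ x in (-1:ℝ)..1, (derivative q).eval x = q.eval 1 - q.eval (-1) := by
  apply intervalIntegral.integral_deriv_eq_sub' (fun x => q.eval x)
  · funext x; exact Polynomial.deriv q
  · intro x _; exact q.differentiableAt
  · exact ((derivative q).continuous).continuousOn

noncomputable def polyI (q : Polynomial ℝ) : ℝ := ∫ x in (-1:ℝ)..1, q.eval x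

lemma poly_intable (q : Polynomial ℝ) :
    IntervalIntegrable (fun x => q.eval x) MeasureTheory.volume (-1:ℝ) 1 :=
  q.continuous.intervalIntegrable _ _

lemma polyI_add (q r : Polynomial ℝ) : polyI (q + r) = polyI q + polyI r := by
  unfold polyI
  simp only [eval_add]
  exact intervalIntegral.integral_add (poly_intable q) (poly_intable r)

lemma polyI_smul (a : ℝ) (q : Polynomial ℝ) : polyI (C a * q) = a * polyI q := by
  unfold polyI
  simp only [eval_mul, eval_C]
  exact intervalIntegral.integral_const_mul a _

lemma polyI_sub (q r : Polynomial ℝ) : polyI (q - r) = polyI q - polyI r := by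
  have := polyI_add (q - r) r
  simp at this; linarith

lemma polyI_deriv (q : Polynomial ℝ) : polyI (derivative q) = q.eval 1 - q.eval (-1) :=
  integral_poly_deriv q

lemma sq_succ_ne (m n : ℕ) (h : m ≠ n) : (m:ℝ)*((m:ℝ)+1) - (n:ℝ)*((n:ℝ)+1) ≠ 0 := by
  have key : ∀ a b : ℕ, a < b → (a:ℝ)*((a:ℝ)+1) < (b:ℝ)*((b:ℝ)+1) := by
    intro a b hab
    have : (a:ℝ) < b := by exact_mod_cast hab
    have ha : (0:ℝ) ≤ a := Nat.cast_nonneg a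
    nlinarith
  rcases h.lt_or_gt with hlt | hlt
  · exact ne_of_lt (by linarith [key m n hlt])
  · exact ne_of_gt (by linarith [key n m hlt])

lemma leg_orth {m n : ℕ} (h : m ≠ n) : polyI (Leg m * Leg n) = 0 := by
  set W : Polynomial ℝ := (1 - X^2) * (Leg m * derivative (Leg n) - Leg n * derivative (Leg m))
    with hW
  have hdW : derivative W = C ((m:ℝ)*((m:ℝ)+1) - (n:ℝ)*((n:ℝ)+1)) * (Leg m * Leg n) := by
    have hOm := leg_ode m
    have hOn := leg_ode n
    rw [hW]
    simp only [derivative_mul, derivative_sub, derivative_one, derivative_pow, derivative_X,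
      Nat.cast_ofNat, map_ofNat, mul_one, pow_one, zero_sub, C_sub, C_mul]
    simp only [C_add, C_mul, C_1] at hOm hOn ⊢
    linear_combination (Leg n) * hOm - (Leg m) * hOn
  have h1 : polyI (derivative W) = 0 := by
    rw [polyI_deriv, hW]
    simp
  rw [hdW, polyI_smul] at h1
  exact (mul_eq_zero.mp h1).resolve_left (sq_succ_ne m n h)

lemma polyI_one : polyI 1 = 2 := by
  unfold polyI; simp; norm_num

lemma polyI_X_sq : polyI (X^2) = 2/3 := by
  unfold polyI
  simp only [eval_pow, eval_X]
  rw [integral_pow]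
  norm_num

lemma leg_norm_step (n : ℕ) : polyI (Leg (n+1) ^ 2) = (2*(n:ℝ)+1)/(2*(n:ℝ)+3) * polyI (Leg n ^ 2) := by
  cases n with
  | zero =>
    rw [Leg_one, Leg_zero, polyI_X_sq, one_pow, polyI_one]
    norm_num
  | succ n =>
    -- relation: (n+2) * polyI (Leg (n+2)^2) = (2n+3) * polyI (X * Leg (n+1) * Leg (n+2))
    have e1 := congrArg polyI (congrArg (· * Leg (n+2)) (bonnet n))
    rw [show C ((n:ℝ)+2) * Leg (n+2) * Leg (n+2) = C ((n:ℝ)+2) * (Leg (n+2)^2) by ring,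
        show (C (2*(n:ℝ)+3) * X * Leg (n+1) - C ((n:ℝ)+1) * Leg n) * Leg (n+2)
          = C (2*(n:ℝ)+3) * (X * Leg (n+1) * Leg (n+2)) - C ((n:ℝ)+1) * (Leg n * Leg (n+2)) by ring,
        polyI_sub, polyI_smul, polyI_smul, polyI_smul,
        leg_orth (show n ≠ n+2 by omega), mul_zero, sub_zero] at e1
    -- relation: (n+3) * 0 = (2n+5) * polyI (X*Leg(n+2)*Leg(n+1)) - (n+2) * polyI (Leg(n+1)^2)
    have e2 := congrArg polyI (congrArg (· * Leg (n+1)) (bonnet (n+1)))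
    push_cast at e2
    rw [show C ((n:ℝ)+1+2) * Leg (n+1+2) * Leg (n+1) = C ((n:ℝ)+3) * (Leg (n+3) * Leg (n+1)) by
          push_cast; ring_nf,
        show (C (2*((n:ℝ)+1)+3) * X * Leg (n+1+1) - C ((n:ℝ)+1+1) * Leg (n+1)) * Leg (n+1)
          = C (2*(n:ℝ)+5) * (X * Leg (n+1) * Leg (n+2)) - C ((n:ℝ)+2) * (Leg (n+1)^2) by
          push_cast; ring_nf,
        polyI_sub, polyI_smul, polyI_smul, polyI_smul,
        leg_orth (show n+3 ≠ n+1 by omega), mul_zero] at e2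
    -- combine
    have h3 : (0:ℝ) < 2*(n:ℝ)+5 := by positivity
    have h4 : (0:ℝ) < (n:ℝ)+2 := by positivity
    have hx : polyI (X * Leg (n+1) * Leg (n+2)) = ((n:ℝ)+2) / (2*(n:ℝ)+5) * polyI (Leg (n+1)^2) := by
      field_simp
      linarith
    rw [hx] at e1
    push_cast
    have h5 : ((n:ℝ)+2) ≠ 0 := by positivity
    field_simp at e1 ⊢
    nlinarith [e1]

lemma leg_norm (n : ℕ) : polyI (Leg n ^ 2) = 2/(2*(n:ℝ)+1) := by
  induction n with
  | zero => rw [Leg_zero, one_pow, polyI_one]; norm_num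
  | succ n ih =>
    rw [leg_norm_step n, ih]
    push_cast
    have h1 : (0:ℝ) < 2*(n:ℝ)+1 := by positivity
    have h3 : (0:ℝ) < 2*(n:ℝ)+3 := by positivity
    field_simp
    ring

lemma leg_sq_le_one {n : ℕ} {x : ℝ} (hx : x ∈ Set.Icc (-1:ℝ) 1) :
    ((Leg n).eval x)^2 ≤ 1 := by
  cases n with
  | zero => simp [Leg_zero]
  | succ n =>
    set m : ℕ := n + 1
    set H : Polynomial ℝ := C ((m:ℝ)*((m:ℝ)+1)) * (Leg m)^2 + (1 - X^2) * (derivative (Leg m))^2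
      with hH
    have hdH : derivative H = 2 * X * (derivative (Leg m))^2 := by
      have hOde := leg_ode m
      rw [hH]
      simp only [derivative_add, derivative_mul, derivative_C, derivative_sub, derivative_one,
        derivative_pow, derivative_X, Nat.cast_ofNat, map_ofNat, zero_mul, zero_add, mul_one,
        pow_one, zero_sub]
      simp only [C_add, C_mul, C_1] at hOde ⊢
      linear_combination (-2) * (derivative (Leg m)) * hOde
    have hderiv : ∀ y : ℝ, HasDerivAt (fun t => H.eval t) ((derivative H).eval y) y :=
      fun y => H.hasDerivAt y
    -- H is monotone on [0,1], antitone on [-1,0]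
    have hmono : MonotoneOn (fun t => H.eval t) (Set.Icc 0 1) := by
      apply monotoneOn_of_deriv_nonneg (convex_Icc 0 1)
        (H.continuous.continuousOn)
        (fun y _ => (H.hasDerivAt y).differentiableAt.differentiableWithinAt)
      intro y hy
      rw [Polynomial.deriv, hdH]
      simp only [eval_mul, eval_ofNat, eval_X, eval_pow]
      have : 0 ≤ y := by
        simp only [interior_Icc, Set.mem_Ioo] at hy
        linarith [hy.1]
      positivity
    have hanti : AntitoneOn (fun t => H.eval t) (Set.Icc (-1) 0) := by
      apply antitoneOn_of_deriv_nonpos (convex_Icc (-1) 0)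
        (H.continuous.continuousOn)
        (fun y _ => (H.hasDerivAt y).differentiableAt.differentiableWithinAt)
      intro y hy
      rw [Polynomial.deriv, hdH]
      simp only [eval_mul, eval_ofNat, eval_X, eval_pow]
      have hy0 : y ≤ 0 := by
        simp only [interior_Icc, Set.mem_Ioo] at hy
        linarith [hy.2]
      nlinarith [sq_nonneg ((derivative (Leg m)).eval y)]
    have hH1 : H.eval 1 = (m:ℝ)*((m:ℝ)+1) := by
      rw [hH]; simp [Leg_eval_one]
    have hHm1 : H.eval (-1) = (m:ℝ)*((m:ℝ)+1) := by
      rw [hH]; simp only [eval_add, eval_mul, eval_C, eval_sub, eval_one, eval_pow, eval_X,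
        Leg_eval_neg_one]
      rw [← pow_mul, mul_comm m 2, pow_mul]
      norm_num
    have hb : H.eval x ≤ (m:ℝ)*((m:ℝ)+1) := by
      rcases le_or_gt 0 x with h0 | h0
      · have := hmono (Set.mem_Icc.mpr ⟨h0, hx.2⟩) (Set.mem_Icc.mpr ⟨zero_le_one, le_refl 1⟩) hx.2
        simpa [hH1] using this
      · have := hanti (Set.mem_Icc.mpr ⟨le_refl (-1:ℝ), by norm_num⟩)
          (Set.mem_Icc.mpr ⟨hx.1, h0.le⟩) hx.1
        simpa [hHm1] using this
    have hlow : (m:ℝ)*((m:ℝ)+1) * ((Leg m).eval x)^2 ≤ H.eval x := by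
      rw [hH]
      simp only [eval_add, eval_mul, eval_C, eval_sub, eval_one, eval_pow, eval_X]
      have h1x : 0 ≤ 1 - x^2 := by nlinarith [hx.1, hx.2]
      nlinarith [mul_nonneg h1x (sq_nonneg ((derivative (Leg m)).eval x))]
    have hmpos : (0:ℝ) < (m:ℝ)*((m:ℝ)+1) := by
      have : (1:ℝ) ≤ (m:ℝ) := by exact_mod_cast Nat.one_le_iff_ne_zero.mpr (by omega)
      nlinarith
    nlinarith [hb, hlow]

lemma leg_deg (n : ℕ) : (Leg n).degree ≤ n ∧ 0 < (Leg n).coeff n := by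
  induction n using Nat.twoStepInduction with
  | zero => simp [Leg_zero]
  | one => simp [Leg_one]
  | more n ih2 ih1 =>
    have key : Leg (n+2) = C ((2*(n:ℝ)+3)/((n:ℝ)+2)) * X * Leg (n+1)
        - C (((n:ℝ)+1)/((n:ℝ)+2)) * Leg n := rfl
    have cast1 : (1 : WithBot ℕ) + ((n+1:ℕ) : WithBot ℕ) = ((n+2:ℕ) : WithBot ℕ) := by
      exact_mod_cast (by omega : 1 + (n+1) = n+2)
    have cast2 : (0 : WithBot ℕ) + ((n:ℕ) : WithBot ℕ) ≤ ((n+2:ℕ) : WithBot ℕ) := by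
      rw [zero_add]
      exact_mod_cast Nat.le_add_right n 2
    constructor
    · rw [key]
      apply le_trans (degree_sub_le _ _)
      apply max_le
      · apply le_trans (degree_mul_le _ _)
        have h1 : degree (C ((2*(n:ℝ)+3)/((n:ℝ)+2)) * X) ≤ 1 := by
          apply le_trans (degree_mul_le _ _)
          apply le_trans (add_le_add degree_C_le degree_X_le)
          norm_num
        rw [show ((n+2 : ℕ) : WithBot ℕ) = 1 + ((n+1:ℕ) : WithBot ℕ) from cast1.symm]
        exact add_le_add h1 ih1.1
      · apply le_trans (degree_mul_le _ _)
        exact le_trans (add_le_add degree_C_le ih2.1) cast2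
    · rw [key, coeff_sub, mul_assoc, coeff_C_mul, coeff_C_mul]
      rw [show (X : Polynomial ℝ) * Leg (n+1) = Leg (n+1) * X by ring, coeff_mul_X]
      have hz : (Leg n).coeff (n+2) = 0 := by
        apply coeff_eq_zero_of_degree_lt
        apply lt_of_le_of_lt ih2.1
        exact_mod_cast (by omega : n < n+2)
      rw [hz, mul_zero, sub_zero]
      have h0 : 0 < (2*(n:ℝ)+3)/((n:ℝ)+2) := by positivity
      exact mul_pos h0 ih1.2

lemma leg_span : ∀ (p : ℕ) (v : Polynomial ℝ), v.degree ≤ p →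
    ∃ c : ℕ → ℝ, v = ∑ j ∈ Finset.range (p+1), C (c j) * Leg j := by
  intro p
  induction p with
  | zero =>
    intro v hv
    refine ⟨fun _ => v.coeff 0, ?_⟩
    rw [Polynomial.eq_C_of_degree_le_zero hv]
    simp [Leg_zero]
  | succ p ih =>
    intro v hv
    set a : ℝ := v.coeff (p+1) / (Leg (p+1)).coeff (p+1) with ha
    set w : Polynomial ℝ := v - C a * Leg (p+1) with hw
    have hdw : w.degree ≤ p := by
      rw [Polynomial.degree_le_iff_coeff_zero]
      intro m hm
      have hm' : p + 1 ≤ m := by exact_mod_cast hm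
      rw [hw, coeff_sub, coeff_C_mul]
      rcases eq_or_lt_of_le hm' with h | h
      · rw [← h, ha]
        field_simp [ne_of_gt (leg_deg (p+1)).2]
        ring
      · have h1 : v.coeff m = 0 := coeff_eq_zero_of_degree_lt (lt_of_le_of_lt hv (by exact_mod_cast h))
        have h2 : (Leg (p+1)).coeff m = 0 := coeff_eq_zero_of_degree_lt
          (lt_of_le_of_lt (leg_deg (p+1)).1 (by exact_mod_cast h))
        rw [h1, h2, mul_zero, sub_zero]
    obtain ⟨c, hc⟩ := ih w hdw
    refine ⟨fun j => if j = p+1 then a else c j, ?_⟩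
    rw [Finset.sum_range_succ]
    simp only [↓reduceIte]
    have : ∑ j ∈ Finset.range (p+1), C (if j = p+1 then a else c j) * Leg j
        = ∑ j ∈ Finset.range (p+1), C (c j) * Leg j := by
      apply Finset.sum_congr rfl
      intro j hj
      rw [if_neg (by simp at hj; omega)]
    rw [this, ← hc, hw]
    ring

lemma polyI_zero : polyI 0 = 0 := by unfold polyI; simp

lemma polyI_sum {ι : Type*} (s : Finset ι) (f : ι → Polynomial ℝ) :
    polyI (∑ i ∈ s, f i) = ∑ i ∈ s, polyI (f i) := by
  classical
  induction s using Finset.induction_on with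
  | empty => simp [polyI_zero]
  | insert _ _ h ih => rw [Finset.sum_insert h, polyI_add, ih, Finset.sum_insert h]

lemma leg_coef_formula {p : ℕ} {v : Polynomial ℝ} {c : ℕ → ℝ}
    (hv : v = ∑ j ∈ Finset.range (p+1), C (c j) * Leg j) {k : ℕ} (hk : k ∈ Finset.range (p+1)) :
    polyI (v * Leg k) = c k * (2/(2*(k:ℝ)+1)) := by
  have : v * Leg k = ∑ j ∈ Finset.range (p+1), C (c j) * (Leg j * Leg k) := by
    rw [hv, Finset.sum_mul]
    apply Finset.sum_congr rfl
    intro j _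
    ring
  rw [this, polyI_sum]
  rw [Finset.sum_eq_single k]
  · rw [polyI_smul, show Leg k * Leg k = Leg k ^ 2 by ring, leg_norm]
  · intro j _ hj
    rw [polyI_smul, leg_orth hj, mul_zero]
  · intro h; exact absurd hk h

lemma leg_parseval {p : ℕ} {v : Polynomial ℝ} {c : ℕ → ℝ}
    (hv : v = ∑ j ∈ Finset.range (p+1), C (c j) * Leg j) :
    polyI (v^2) = ∑ j ∈ Finset.range (p+1), (c j) * polyI (v * Leg j) := by
  have : v^2 = ∑ j ∈ Finset.range (p+1), C (c j) * (v * Leg j) := by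
    nth_rewrite 1 [sq]
    nth_rewrite 2 [hv]
    rw [Finset.mul_sum]
    apply Finset.sum_congr rfl
    intro j _
    ring
  rw [this, polyI_sum]
  apply Finset.sum_congr rfl
  intro j _
  rw [polyI_smul]

lemma leg_coef_bound (v : Polynomial ℝ) (k : ℕ) :
    |polyI (v * Leg k)| ≤ ∫ y in (-1:ℝ)..1, |v.eval y| := by
  unfold polyI
  apply le_trans (intervalIntegral.abs_integral_le_integral_abs (by norm_num))
  apply intervalIntegral.integral_mono_on (by norm_num : (-1:ℝ) ≤ 1)
  · exact ((v * Leg k).continuous.abs).intervalIntegrable _ _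
  · exact (v.continuous.abs).intervalIntegrable _ _
  · intro x hx
    rw [eval_mul, abs_mul]
    have h1 : |(Leg k).eval x| ≤ 1 := by
      rw [← Real.sqrt_one, show |(Leg k).eval x| = Real.sqrt (((Leg k).eval x)^2) by
        rw [Real.sqrt_sq_eq_abs]]
      exact Real.sqrt_le_sqrt (leg_sq_le_one hx)
    calc |v.eval x| * |(Leg k).eval x| ≤ |v.eval x| * 1 :=
      mul_le_mul_of_nonneg_left h1 (abs_nonneg _)
    _ = |v.eval x| := mul_one _

lemma sum_odd (p : ℕ) : ∑ j ∈ Finset.range (p+1), (2*(j:ℝ)+1) = ((p:ℝ)+1)^2 := by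
  induction p with
  | zero => simp
  | succ p ih =>
    rw [Finset.sum_range_succ, ih]
    push_cast
    ring


end LegendreAux

open Polynomial in
/-- For any polynomial `v` of degree at most `p` on the interval `(-1,1)`, the `L²(-1,1)` norm
of `v` is bounded by `(p+1)/√2` times the `L¹(-1,1)` norm of `v`. -/
theorem polynomial_L2_le_L1 (p : ℕ) (v : Polynomial ℝ) (hdeg : v.degree ≤ p) :
    Real.sqrt (∫ y in (-1 : ℝ)..1, (v.eval y) ^ 2) ≤
      (((p : ℝ) + 1) / Real.sqrt 2) * ∫ y in (-1 : ℝ)..1, |v.eval y| := by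
  set L : ℝ := ∫ y in (-1 : ℝ)..1, |v.eval y| with hLdef
  have hL : 0 ≤ L := by
    rw [hLdef]
    apply intervalIntegral.integral_nonneg (by norm_num : (-1:ℝ) ≤ 1)
    intro x _; exact abs_nonneg _
  obtain ⟨c, hc⟩ := leg_span p v hdeg
  have hI : (∫ y in (-1 : ℝ)..1, (v.eval y) ^ 2) = polyI (v^2) := by
    unfold polyI
    simp only [eval_pow]
  have key : polyI (v^2) ≤ (((p:ℝ)+1)^2/2) * L^2 := by
    rw [leg_parseval hc]
    have hterm : ∀ j ∈ Finset.range (p+1),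
        c j * polyI (v * Leg j) ≤ (2*(j:ℝ)+1)/2 * L^2 := by
      intro j hj
      have hcoef := leg_coef_formula hc hj
      have hpos : (0:ℝ) < 2/(2*(j:ℝ)+1) := by positivity
      have hcj : c j = polyI (v * Leg j) * ((2*(j:ℝ)+1)/2) := by
        rw [hcoef]
        field_simp
      rw [hcj]
      have hb := leg_coef_bound v j
      rw [← hLdef] at hb
      have hsq : (polyI (v * Leg j))^2 ≤ L^2 := by
        have h1 := (abs_le.mp hb).1
        have h2 := (abs_le.mp hb).2
        exact sq_le_sq' h1 h2
      calc polyI (v * Leg j) * ((2*(j:ℝ)+1)/2) * polyI (v * Leg j)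
          = (2*(j:ℝ)+1)/2 * (polyI (v * Leg j))^2 := by ring
        _ ≤ (2*(j:ℝ)+1)/2 * L^2 := by
            apply mul_le_mul_of_nonneg_left hsq
            positivity
    apply le_trans (Finset.sum_le_sum hterm)
    rw [show ∑ j ∈ Finset.range (p+1), (2*(j:ℝ)+1)/2 * L^2
        = (∑ j ∈ Finset.range (p+1), (2*(j:ℝ)+1)) * (L^2/2) by
        rw [Finset.sum_mul]; apply Finset.sum_congr rfl; intro j _; ring,
      sum_odd]
    exact le_of_eq (by ring)
  rw [hI]
  have hs2 : (0:ℝ) < Real.sqrt 2 := Real.sqrt_pos.mpr (by norm_num)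
  have hrhs : (((p:ℝ)+1)/Real.sqrt 2) * L = Real.sqrt ((((p:ℝ)+1)^2/2) * L^2) := by
    rw [show (((p:ℝ)+1)^2/2) * L^2 = ((((p:ℝ)+1)/Real.sqrt 2) * L)^2 by
      rw [mul_pow, div_pow, Real.sq_sqrt (by norm_num : (0:ℝ) ≤ 2)]]
    rw [Real.sqrt_sq (by positivity)]
  rw [hrhs]
  exact Real.sqrt_le_sqrt key
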